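/- Let d_v ≥ 3 and d_c ≥ 2 be integers, and let m_prev > 0, m_λ > 0, m > 3 be real numbers. Set x = m_λ + (d_v − 1)·m_prev and δ = 1 − 3/m. If √(π/m)·exp(−m/4) < ((d_c − 1)/δ)·√(π/x)·exp(−x/4) and m_λ > 4·ln((d_c − 1)/δ), then m > (d_v − 1)·m_prev. -/

import Mathlib

/-- one-step growth condition of Theorem 2. Let `d_v ≥ 3`, `d_c ≥ 2`,
`m_prev, m_λ > 0`, `m > 3`, `x = m_λ + (d_v − 1)·m_prev` and `δ = 1 − 3/m`.  If
`√(π/m)·exp(−m/4) < ((d_c − 1)/δ)·√(π/x)·exp(−x/4)` and `m_λ > 4·ln((d_c − 1)/δ)`, then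
`m > (d_v − 1)·m_prev`. -/
theorem de_one_step_growth (d_v d_c : ℕ) (hdv : 3 ≤ d_v) (hdc : 2 ≤ d_c)
    (m_prev m_lam m x δ : ℝ) (hprev : 0 < m_prev) (hlam : 0 < m_lam) (hm : 3 < m)
    (hx : x = m_lam + ((d_v : ℝ) - 1) * m_prev) (hδ : δ = 1 - 3 / m)
    (h1 : Real.sqrt (Real.pi / m) * Real.exp (-m / 4)
        < ((d_c : ℝ) - 1) / δ * Real.sqrt (Real.pi / x) * Real.exp (-x / 4))
    (h2 : m_lam > 4 * Real.log (((d_c : ℝ) - 1) / δ)) :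
    m > ((d_v : ℝ) - 1) * m_prev := by
  by_contra hcon
  push_neg at hcon
  set C := ((d_c : ℝ) - 1) / δ with hC
  have hm0 : (0:ℝ) < m := by linarith
  have hδ0 : 0 < δ := by
    rw [hδ]
    have : 3 / m < 1 := by rw [div_lt_one hm0]; linarith
    linarith
  have hdc1 : (1:ℝ) ≤ (d_c:ℝ) - 1 := by
    have : (2:ℝ) ≤ (d_c:ℝ) := by exact_mod_cast hdc
    linarith
  have hC0 : 0 < C := div_pos (by linarith) hδ0
  have hxm : m < x := by rw [hx]; linarith
  have hx0 : 0 < x := by linarith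
  have hexp : Real.exp (-x / 4) < Real.exp (-m / 4) / C := by
    have h3 : -x / 4 < -m / 4 - Real.log C := by
      have : 4 * Real.log C < x - m := by rw [hx]; linarith
      linarith
    calc Real.exp (-x / 4) < Real.exp (-m / 4 - Real.log C) := Real.exp_lt_exp.mpr h3
      _ = Real.exp (-m / 4) / C := by rw [Real.exp_sub, Real.exp_log hC0]
  have hsq : Real.sqrt (Real.pi / x) ≤ Real.sqrt (Real.pi / m) :=
    Real.sqrt_le_sqrt (div_le_div_of_nonneg_left Real.pi_pos.le hm0 hxm.le)
  have hsm : 0 < Real.sqrt (Real.pi / m) :=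
    Real.sqrt_pos.mpr (div_pos Real.pi_pos hm0)
  have hsx : 0 ≤ Real.sqrt (Real.pi / x) := Real.sqrt_nonneg _
  have hex : 0 < Real.exp (-x / 4) := Real.exp_pos _
  have key : C * Real.sqrt (Real.pi / x) * Real.exp (-x / 4)
      < Real.sqrt (Real.pi / m) * Real.exp (-m / 4) := by
    have step1 : C * Real.sqrt (Real.pi / x) * Real.exp (-x / 4)
        ≤ C * Real.sqrt (Real.pi / m) * Real.exp (-x / 4) := by
      have := mul_le_mul_of_nonneg_left hsq hC0.le
      exact mul_le_mul_of_nonneg_right this hex.le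
    have step2 : C * Real.sqrt (Real.pi / m) * Real.exp (-x / 4)
        < C * Real.sqrt (Real.pi / m) * (Real.exp (-m / 4) / C) := by
      apply mul_lt_mul_of_pos_left hexp (mul_pos hC0 hsm)
    have step3 : C * Real.sqrt (Real.pi / m) * (Real.exp (-m / 4) / C)
        = Real.sqrt (Real.pi / m) * Real.exp (-m / 4) := by
      field_simp
    linarith
  linarith
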